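/- Let C ∈ ℝ^{k×k} be symmetric with k distinct eigenvalues, let b and t be such that k = bt. Then there exists a matrix H ∈ ℝ^{k×b} such that the block Krylov matrix [H, CH, C²H, ..., C^{t-1}H] ∈ ℝ^{k×k} is invertible. Consequently, the polynomial H ↦ det([H, CH, ..., C^{t-1}H]) in the entries of H is a nonzero polynomial. -/

import Mathlib

/-- For a real symmetric `k×k` matrix `C` with distinct eigenvalues and `k = bt`,
there exists a starting block `H ∈ ℝ^{k×b}` making the block Krylov matrix
`[H, CH, ..., C^{t-1}H]` invertible (hence the determinant, a polynomial in the
entries of `H`, is a nonzero polynomial). The `j`-th column of the block Krylov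
matrix is column `j % b` of `C^(j / b) * H`. -/
theorem stmt8 (k b t : ℕ) (hb : 0 < b) (ht : 0 < t) (hk : k = b * t)
    (C : Matrix (Fin k) (Fin k) ℝ) (hC : C.IsHermitian)
    (hdist : Function.Injective hC.eigenvalues) :
    ∃ H : Matrix (Fin k) (Fin b) ℝ,
      IsUnit (Matrix.det (Matrix.of fun i j : Fin k =>
        ((C ^ ((j : ℕ) / b)) * H) i ⟨(j : ℕ) % b, Nat.mod_lt _ hb⟩)) := by
  classical
  set Q : Matrix (Fin k) (Fin k) ℝ := (hC.eigenvectorUnitary : Matrix (Fin k) (Fin k) ℝ) with hQ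
  set μ : Fin k → ℝ := hC.eigenvalues with hμ
  have hstar : star Q * Q = 1 := Unitary.coe_star_mul_self hC.eigenvectorUnitary
  have hstar' : Q * star Q = 1 := Unitary.coe_mul_star_self hC.eigenvectorUnitary
  have hdiag : (RCLike.ofReal ∘ μ : Fin k → ℝ) = μ := rfl
  have hCQ : C * Q = Q * Matrix.diagonal μ := by
    conv_lhs => rw [hC.spectral_theorem]
    rw [Unitary.conjStarAlgAut_apply, Matrix.mul_assoc, Matrix.mul_assoc, ← hQ, hstar, Matrix.mul_one]
    rfl
  have hpow : ∀ p : ℕ, C ^ p * Q = Q * Matrix.diagonal (fun i => μ i ^ p) := by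
    intro p
    induction p with
    | zero => simp
    | succ p ih =>
        rw [pow_succ, Matrix.mul_assoc, hCQ, ← Matrix.mul_assoc, ih, Matrix.mul_assoc,
          Matrix.diagonal_mul_diagonal]
        simp [pow_succ]
  -- selection matrix and Krylov core matrix
  set E : Matrix (Fin k) (Fin b) ℝ :=
    Matrix.of (fun i ℓ => if (i : ℕ) % b = (ℓ : ℕ) then (1 : ℝ) else 0) with hE
  set M : Matrix (Fin k) (Fin k) ℝ :=
    Matrix.of (fun i j => if (i : ℕ) % b = (j : ℕ) % b then μ i ^ ((j : ℕ) / b) else 0) with hM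
  refine ⟨Q * E, ?_⟩
  have hKey : (Matrix.of fun i j : Fin k =>
      ((C ^ ((j : ℕ) / b)) * (Q * E)) i ⟨(j : ℕ) % b, Nat.mod_lt _ hb⟩) = Q * M := by
    ext i j
    have h1 : (C ^ ((j : ℕ) / b)) * (Q * E)
        = Q * (Matrix.diagonal (fun i => μ i ^ ((j : ℕ) / b)) * E) := by
      rw [← Matrix.mul_assoc, hpow, Matrix.mul_assoc]
    rw [Matrix.of_apply, h1, Matrix.mul_apply, Matrix.mul_apply]
    refine Finset.sum_congr rfl fun m _ => ?_
    rw [Matrix.diagonal_mul]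
    by_cases hc : (m : ℕ) % b = (j : ℕ) % b <;> simp [hE, hM, hc]
  rw [hKey, Matrix.det_mul]
  have hdetQ : IsUnit Q.det :=
    isUnit_of_mul_isUnit_left (by rw [← Matrix.det_mul, hstar']; simp)
  refine hdetQ.mul ?_
  -- reindex to a block-diagonal Vandermonde structure
  have hk' : k = t * b := by rw [hk, mul_comm]
  set e : Fin k ≃ Fin t × Fin b := (finCongr hk').trans finProdFinEquiv.symm with he
  have he1 : ∀ j : Fin k, (((e j).1 : ℕ) = (j : ℕ) / b) := fun j => rfl
  have he2 : ∀ j : Fin k, (((e j).2 : ℕ) = (j : ℕ) % b) := fun j => rfl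
  set d : Fin b → Matrix (Fin t) (Fin t) ℝ :=
    fun r => Matrix.vandermonde (fun s => μ (e.symm (s, r))) with hd
  have hMd : M = Matrix.reindex e.symm e.symm (Matrix.blockDiagonal d) := by
    ext i j
    simp only [Matrix.reindex_apply, Matrix.submatrix_apply, Equiv.symm_symm,
      Matrix.blockDiagonal_apply, hM, Matrix.of_apply, hd, Matrix.vandermonde]
    by_cases h : (e i).2 = (e j).2
    · have h' : (i : ℕ) % b = (j : ℕ) % b := by rw [← he2 i, ← he2 j, h]
      rw [if_pos h, if_pos h', Prod.mk.eta, Equiv.symm_apply_apply, he1 j]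
    · have h' : ¬ ((i : ℕ) % b = (j : ℕ) % b) := by
        intro hc; exact h (Fin.ext (by rw [he2 i, he2 j, hc]))
      rw [if_neg h, if_neg h']
  rw [hMd, Matrix.det_reindex_self, Matrix.det_blockDiagonal]
  rw [isUnit_iff_ne_zero]
  refine Finset.prod_ne_zero_iff.mpr (fun r _ => ?_)
  rw [hd]
  refine Matrix.det_vandermonde_ne_zero_iff.mpr ?_
  intro s₁ s₂ h
  have := hdist h
  have := e.symm.injective this
  exact (Prod.mk.injEq _ _ _ _).mp this |>.1
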